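/- Let X be a metric space, n ≥ 2, and let x₀, …, x_n ∈ X, y₁, …, y_n ∈ X and x'₁, …, x'_{n−1} ∈ X satisfy: y_i is a midpoint of x_{i−1} and x_i for each 1 ≤ i ≤ n, and x'_i is a midpoint of y_i and y_{i+1} for each 1 ≤ i ≤ n−1. Set x'₀ = x₀ and x'_n = x_n. Then Σ_{i=1}^{n} dist(x'_{i−1}, x'_i)² ≤ Σ_{i=1}^{n} dist(x_{i−1}, x_i)². -/

import Mathlib

/-- `z` is a midpoint of `x` and `y`: `dist x z = dist z y = dist x y / 2`. -/
def IsMidpoint {X : Type*} [MetricSpace X] (z x y : X) : Prop :=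
  dist x z = dist x y / 2 ∧ dist z y = dist x y / 2

/-- **Energy decrease under midpoint shortening.** If `y i` is a midpoint of `x (i-1)` and
`x i` (`1 ≤ i ≤ n`), `x' i` is a midpoint of `y i` and `y (i+1)` (`1 ≤ i ≤ n−1`), and
`x' 0 = x 0`, `x' n = x n`, then the energy `Σ dist(x'_{i−1}, x'_i)²` does not exceed
`Σ dist(x_{i−1}, x_i)²`. -/
lemma sq_bound_aux (a b c t : ℝ) (ht : 0 ≤ t) (h : t ≤ (a + 2*b + c)/4) :
    t^2 ≤ (a^2 + 2*b^2 + c^2)/4 := by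
  nlinarith [sq_nonneg (a-b), sq_nonneg (b-c), sq_nonneg (a-c)]

theorem midpoint_shortening_energy
    {X : Type*} [MetricSpace X] (n : ℕ) (hn : 2 ≤ n)
    (x y x' : ℕ → X)
    (hy : ∀ i, 1 ≤ i → i ≤ n → IsMidpoint (y i) (x (i - 1)) (x i))
    (hx' : ∀ i, 1 ≤ i → i ≤ n - 1 → IsMidpoint (x' i) (y i) (y (i + 1)))
    (h0 : x' 0 = x 0) (hN : x' n = x n) :
    ∑ i ∈ Finset.Icc 1 n, dist (x' (i - 1)) (x' i) ^ 2 ≤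
      ∑ i ∈ Finset.Icc 1 n, dist (x (i - 1)) (x i) ^ 2 := by
  set D : ℕ → ℝ := fun i => dist (x (min (max i 1) n - 1)) (x (min (max i 1) n)) with hD
  have hDeq : ∀ i, 1 ≤ i → i ≤ n → D i = dist (x (i - 1)) (x i) := by
    intro i h1 h2
    simp only [hD]
    rw [max_eq_left h1, min_eq_left h2]
  have hD0 : D 0 = D 1 := by
    have e : min (max 0 1) n = min (max 1 1) n := by omega
    simp only [hD, e]
  have hDn : D (n + 1) = D n := by
    have e : min (max (n + 1) 1) n = min (max n 1) n := by omega
    simp only [hD, e]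
  -- distance between consecutive y's
  have hyy : ∀ i, 1 ≤ i → i + 1 ≤ n → dist (y i) (y (i + 1)) ≤ (D i + D (i + 1)) / 2 := by
    intro i h1 h2
    have a1 := (hy i h1 (by omega)).2
    have a2 := (hy (i + 1) (by omega) h2).1
    have e : i + 1 - 1 = i := by omega
    rw [e] at a2
    calc dist (y i) (y (i + 1)) ≤ dist (y i) (x i) + dist (x i) (y (i + 1)) := dist_triangle _ _ _
      _ = (D i + D (i + 1)) / 2 := by
          rw [a1, a2, hDeq i h1 (by omega), hDeq (i + 1) (by omega) h2, e]; ring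
  -- key pointwise bound
  have hkey : ∀ i, 1 ≤ i → i ≤ n →
      dist (x' (i - 1)) (x' i) ≤ (D (i - 1) + 2 * D i + D (i + 1)) / 4 := by
    intro i h1 h2
    rcases eq_or_lt_of_le h1 with rfl | hi1
    · -- i = 1
      simp only [Nat.sub_self, h0, hD0]
      have b1 := (hy 1 le_rfl (by omega)).1
      have b2 := (hx' 1 le_rfl (by omega)).1
      have b3 := hyy 1 le_rfl (by omega)
      have hd1 : D 1 = dist (x 0) (x 1) := by
        have := hDeq 1 le_rfl (by omega); simpa using this
      calc dist (x 0) (x' 1) ≤ dist (x 0) (y 1) + dist (y 1) (x' 1) := dist_triangle _ _ _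
        _ ≤ (D 1 + 2 * D 1 + D 2) / 4 := by
            rw [b1, b2]
            have h10 : dist (x (1 - 1)) (x 1) = D 1 := by rw [hd1]
            rw [h10]
            linarith
    · rcases eq_or_lt_of_le h2 with rfl | hi2
      · -- i = n
        rw [hN]
        have b1 := (hy i (by omega) le_rfl).2
        have b2 := (hx' (i - 1) (by omega) (by omega)).2
        have e : i - 1 + 1 = i := by omega
        rw [e] at b2
        have b3 := hyy (i - 1) (by omega) (by omega)
        rw [e] at b3
        rw [hDn]
        calc dist (x' (i - 1)) (x i)
            ≤ dist (x' (i - 1)) (y i) + dist (y i) (x i) := dist_triangle _ _ _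
          _ ≤ (D (i - 1) + 2 * D i + D i) / 4 := by
              rw [b1, b2, ← hDeq i (by omega) le_rfl]
              have : dist (y (i - 1)) (y i) ≤ (D (i - 1) + D i) / 2 := b3
              linarith
      · -- 2 ≤ i ≤ n - 1
        have b1 := (hx' (i - 1) (by omega) (by omega)).2
        have b2 := (hx' i (by omega) (by omega)).1
        have e : i - 1 + 1 = i := by omega
        rw [e] at b1
        have b3 := hyy (i - 1) (by omega) (by omega)
        rw [e] at b3
        have b4 := hyy i (by omega) (by omega)
        calc dist (x' (i - 1)) (x' i)
            ≤ dist (x' (i - 1)) (y i) + dist (y i) (x' i) := dist_triangle _ _ _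
          _ ≤ (D (i - 1) + 2 * D i + D (i + 1)) / 4 := by rw [b1, b2]; linarith
  -- squared bound
  have hkey2 : ∀ i ∈ Finset.Icc 1 n, dist (x' (i - 1)) (x' i) ^ 2 ≤
      (D (i - 1) ^ 2 + 2 * D i ^ 2 + D (i + 1) ^ 2) / 4 := by
    intro i hi
    rw [Finset.mem_Icc] at hi
    exact sq_bound_aux _ _ _ _ dist_nonneg (hkey i hi.1 hi.2)
  have step1 : ∑ i ∈ Finset.Icc 1 n, dist (x' (i - 1)) (x' i) ^ 2 ≤
      ∑ i ∈ Finset.Icc 1 n, (D (i - 1) ^ 2 + 2 * D i ^ 2 + D (i + 1) ^ 2) / 4 :=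
    Finset.sum_le_sum hkey2
  -- telescoping identity
  set g : ℕ → ℝ := fun i => D i ^ 2 with hg
  have hg0 : g 0 = g 1 := by simp only [hg, hD0]
  have hgn : g (n + 1) = g n := by simp only [hg, hDn]
  have iden : ∑ i ∈ Finset.Icc 1 n, (g (i - 1) + 2 * g i + g (i + 1)) / 4
      = ∑ i ∈ Finset.Icc 1 n, g i := by
    rw [← Finset.Ico_add_one_right_eq_Icc, Finset.sum_Ico_eq_sum_range, Finset.sum_Ico_eq_sum_range]
    simp only [Nat.add_sub_cancel]
    have e1 : ∀ j : ℕ, (g (1 + j - 1) + 2 * g (1 + j) + g (1 + j + 1)) / 4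
        = g (1 + j) + ((g (j + 2) - g (j + 1)) - (g (j + 1) - g j)) / 4 := by
      intro j
      have a : 1 + j - 1 = j := by omega
      have b : 1 + j = j + 1 := by omega
      have c : j + 1 + 1 = j + 2 := by omega
      rw [a, b, c]; ring
    have tele : ∑ j ∈ Finset.range n, ((g (j + 2) - g (j + 1)) - (g (j + 1) - g j))
        = (g (n + 1) - g n) - (g 1 - g 0) :=
      Finset.sum_range_sub (fun j => g (j + 1) - g j) n
    simp_rw [e1]
    rw [Finset.sum_add_distrib, ← Finset.sum_div, tele, hg0, hgn]
    ring
  calc ∑ i ∈ Finset.Icc 1 n, dist (x' (i - 1)) (x' i) ^ 2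
      ≤ ∑ i ∈ Finset.Icc 1 n, (g (i - 1) + 2 * g i + g (i + 1)) / 4 := step1
    _ = ∑ i ∈ Finset.Icc 1 n, g i := iden
    _ = ∑ i ∈ Finset.Icc 1 n, dist (x (i - 1)) (x i) ^ 2 := by
        apply Finset.sum_congr rfl
        intro i hi
        rw [Finset.mem_Icc] at hi
        simp only [hg, hDeq i hi.1 hi.2]
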